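/- arXiv:2307.01618 — 2 statements merged into one kernel-verified Lean document; each statement's English description precedes it below -/
import Mathlib

section
/- For a finite index set K of regions with positive weights p_k and positive rates δ_k, and budget B > Σ_{k∈K} δ_k, the maximum of Σ_{k∈K} p_k (1 - δ_k/γ_k) over vectors γ with γ_k ≥ δ_k for all k and Σ_k γ_k ≤ B is attained at γ_k* = √(p_k δ_k) · B / Σ_{ℓ∈K} √(p_ℓ δ_ℓ), provided that γ_k* ≥ δ_k for all k. -/
/-- Optimal proportional-to-√(pδ) budget allocation over regions. -/
theorem stmt_0 {K : Type*} [Fintype K] (p δ : K → ℝ) (B : ℝ)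
    (hp : ∀ k, 0 < p k) (hδ : ∀ k, 0 < δ k)
    (hB : ∑ k, δ k < B)
    (γstar : K → ℝ)
    (hγstar : ∀ k, γstar k = Real.sqrt (p k * δ k) * B / ∑ ℓ, Real.sqrt (p ℓ * δ ℓ))
    (hfeas : ∀ k, δ k ≤ γstar k) :
    (∑ k, γstar k ≤ B) ∧
    ∀ γ : K → ℝ, (∀ k, δ k ≤ γ k) → (∑ k, γ k ≤ B) →
      ∑ k, p k * (1 - δ k / γ k) ≤ ∑ k, p k * (1 - δ k / γstar k) := by
  rcases isEmpty_or_nonempty K with hK | hK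
  · constructor
    · simp only [Finset.univ_eq_empty, Finset.sum_empty] at *
      linarith
    · intro γ _ _
      simp
  set S : ℝ := ∑ ℓ, Real.sqrt (p ℓ * δ ℓ) with hS
  have hpd : ∀ k, 0 < p k * δ k := fun k => mul_pos (hp k) (hδ k)
  have hSpos : 0 < S := Finset.sum_pos (fun k _ => Real.sqrt_pos.mpr (hpd k)) Finset.univ_nonempty
  have hBpos : 0 < B := lt_of_le_of_lt (Finset.sum_nonneg fun k _ => (hδ k).le) hB
  have hsum_star : ∑ k, γstar k = B := by
    calc ∑ k, γstar k = ∑ k, Real.sqrt (p k * δ k) * B / S := by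
          exact Finset.sum_congr rfl fun k _ => hγstar k
      _ = (∑ k, Real.sqrt (p k * δ k)) * B / S := by
          rw [← Finset.sum_div, ← Finset.sum_mul]
      _ = B := by field_simp; exact hS.symm
  refine ⟨hsum_star.le, ?_⟩
  intro γ hγfeas hγsum
  have hγpos : ∀ k, 0 < γ k := fun k => lt_of_lt_of_le (hδ k) (hγfeas k)
  -- value at γstar of ∑ p δ / γstar equals S^2 / B
  have hterm : ∀ k, p k * (δ k / γstar k) = Real.sqrt (p k * δ k) * S / B := by
    intro k
    rw [hγstar k]
    have hsq : Real.sqrt (p k * δ k) ^ 2 = p k * δ k := Real.sq_sqrt (hpd k).le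
    have hsqrt_pos : 0 < Real.sqrt (p k * δ k) := Real.sqrt_pos.mpr (hpd k)
    field_simp
    linear_combination (-1) * hsq
  have hstar_sum : ∑ k, p k * (δ k / γstar k) = S ^ 2 / B := by
    rw [Finset.sum_congr rfl fun k _ => hterm k]
    rw [← Finset.sum_div, ← Finset.sum_mul, ← hS, sq]
  -- Cauchy–Schwarz bound
  have hCS : S ^ 2 ≤ (∑ k, p k * (δ k / γ k)) * (∑ k, γ k) := by
    have h1 : S = ∑ k, Real.sqrt (p k * δ k / γ k) * Real.sqrt (γ k) := by
      refine Finset.sum_congr rfl fun k _ => ?_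
      rw [← Real.sqrt_mul (div_nonneg (hpd k).le (hγpos k).le), div_mul_cancel₀ _ (hγpos k).ne']
    have h2 := Finset.sum_mul_sq_le_sq_mul_sq Finset.univ
      (fun k => Real.sqrt (p k * δ k / γ k)) (fun k => Real.sqrt (γ k))
    rw [← h1] at h2
    calc S ^ 2 ≤ (∑ k, Real.sqrt (p k * δ k / γ k) ^ 2) * ∑ k, Real.sqrt (γ k) ^ 2 := h2
      _ = (∑ k, p k * (δ k / γ k)) * (∑ k, γ k) := by
          congr 1
          · refine Finset.sum_congr rfl fun k _ => ?_
            rw [Real.sq_sqrt (div_nonneg (hpd k).le (hγpos k).le), mul_div_assoc]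
          · exact Finset.sum_congr rfl fun k _ => Real.sq_sqrt (hγpos k).le
  have hkey : ∑ k, p k * (δ k / γstar k) ≤ ∑ k, p k * (δ k / γ k) := by
    rw [hstar_sum, div_le_iff₀ hBpos]
    have hnn : 0 ≤ ∑ k, p k * (δ k / γ k) :=
      Finset.sum_nonneg fun k _ => mul_nonneg (hp k).le (div_nonneg (hδ k).le (hγpos k).le)
    calc S ^ 2 ≤ (∑ k, p k * (δ k / γ k)) * (∑ k, γ k) := hCS
      _ ≤ (∑ k, p k * (δ k / γ k)) * B := by
          exact mul_le_mul_of_nonneg_left hγsum hnn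
  have hrw : ∀ (v : K → ℝ), ∑ k, p k * (1 - δ k / v k)
      = ∑ k, p k - ∑ k, p k * (δ k / v k) := by
    intro v
    rw [← Finset.sum_sub_distrib]
    refine Finset.sum_congr rfl fun k _ => by ring
  rw [hrw γ, hrw γstar]
  linarith
end

section
/- Let S be a finite nonempty set, p_k, δ_k > 0, L_k > 0 for k ∈ S, and B > Σ_{k∈S} L_k. Let S̃ ⊆ S and define γ*_k = L_k for k ∈ S∖S̃ and γ*_k = √(p_k δ_k)·(B − Σ_{ℓ∈S∖S̃} L_ℓ)/Σ_{ℓ∈S̃} √(p_ℓ δ_ℓ) for k ∈ S̃ (with S̃ nonempty). If γ*_k > L_k for all k ∈ S̃ and √(p_k δ_k / λ) ≤ L_k for all k ∈ S∖S̃ where √λ = Σ_{ℓ∈S̃}√(p_ℓ δ_ℓ)/(B − Σ_{ℓ∈S∖S̃} L_ℓ), then γ* is the unique maximizer of Σ_{k∈S} p_k(1 − δ_k/γ_k) subject to γ_k ≥ L_k for all k ∈ S and Σ_{k∈S} γ_k ≤ B. -/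
/-- Tangent-line gap identity for the strictly concave function `x ↦ p*(1 - d/x)`. -/
lemma tangent_gap (p d a x : ℝ) (ha : a ≠ 0) (hx : x ≠ 0) :
    p * (1 - d / a) + (p * d / a ^ 2) * (x - a) - p * (1 - d / x)
      = p * d * (x - a) ^ 2 / (a ^ 2 * x) := by
  field_simp
  ring

/-- KKT characterization (Proposition 2) of the follower's best response on its
winning set `S`: regions in `S \ S̃` sit at their lower bound, regions in `S̃`
receive budget proportional to √(p δ); under the KKT inequalities this is the
unique maximizer. -/
theorem stmt_6 {K : Type*} [Fintype K] [DecidableEq K]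
    (S Stilde : Finset K) (hSt : Stilde ⊆ S) (hStne : Stilde.Nonempty)
    (p δ L : K → ℝ) (B : ℝ)
    (hp : ∀ k ∈ S, 0 < p k) (hδ : ∀ k ∈ S, 0 < δ k) (hL : ∀ k ∈ S, 0 < L k)
    (hB : ∑ k ∈ S, L k < B)
    (C sqrtlam : ℝ)
    (hC : C = B - ∑ ℓ ∈ S \ Stilde, L ℓ)
    (hsqrtlam : sqrtlam = (∑ ℓ ∈ Stilde, Real.sqrt (p ℓ * δ ℓ)) / C)
    (γstar : K → ℝ)
    (hγstar1 : ∀ k ∈ S \ Stilde, γstar k = L k)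
    (hγstar2 : ∀ k ∈ Stilde,
      γstar k = Real.sqrt (p k * δ k) * C / ∑ ℓ ∈ Stilde, Real.sqrt (p ℓ * δ ℓ))
    (hint : ∀ k ∈ Stilde, L k < γstar k)
    (hdual : ∀ k ∈ S \ Stilde, Real.sqrt (p k * δ k) / sqrtlam ≤ L k) :
    ((∀ k ∈ S, L k ≤ γstar k) ∧ ∑ k ∈ S, γstar k ≤ B) ∧
    ∀ γ : K → ℝ, (∀ k ∈ S, L k ≤ γ k) → (∑ k ∈ S, γ k ≤ B) →
      (∑ k ∈ S, p k * (1 - δ k / γ k) ≤ ∑ k ∈ S, p k * (1 - δ k / γstar k)) ∧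
      (∑ k ∈ S, p k * (1 - δ k / γ k) = ∑ k ∈ S, p k * (1 - δ k / γstar k) →
        ∀ k ∈ S, γ k = γstar k) := by
  have hpd : ∀ k ∈ S, 0 < p k * δ k := fun k hk => mul_pos (hp k hk) (hδ k hk)
  have hsq : ∀ k ∈ Stilde, 0 < Real.sqrt (p k * δ k) := fun k hk =>
    Real.sqrt_pos.mpr (hpd k (hSt hk))
  have hSsqpos : 0 < ∑ ℓ ∈ Stilde, Real.sqrt (p ℓ * δ ℓ) :=
    Finset.sum_pos hsq hStne
  have hsplitL : ∑ k ∈ S \ Stilde, L k + ∑ k ∈ Stilde, L k = ∑ k ∈ S, L k :=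
    Finset.sum_sdiff hSt
  have hLSt : 0 < ∑ k ∈ Stilde, L k :=
    Finset.sum_pos (fun k hk => hL k (hSt hk)) hStne
  have hCpos : 0 < C := by rw [hC]; linarith
  have hsl : 0 < sqrtlam := by rw [hsqrtlam]; exact div_pos hSsqpos hCpos
  set lam := sqrtlam ^ 2 with hlamdef
  have hlampos : 0 < lam := pow_pos hsl 2
  -- feasibility of γstar
  have hfeas1 : ∀ k ∈ S, L k ≤ γstar k := by
    intro k hk
    by_cases h : k ∈ Stilde
    · exact (hint k h).le
    · rw [hγstar1 k (Finset.mem_sdiff.mpr ⟨hk, h⟩)]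
  have hγpos : ∀ k ∈ S, 0 < γstar k := fun k hk =>
    lt_of_lt_of_le (hL k hk) (hfeas1 k hk)
  have hsum : ∑ k ∈ S, γstar k = B := by
    have h1 : ∑ k ∈ S \ Stilde, γstar k + ∑ k ∈ Stilde, γstar k = ∑ k ∈ S, γstar k :=
      Finset.sum_sdiff hSt
    have h2 : ∑ k ∈ S \ Stilde, γstar k = ∑ k ∈ S \ Stilde, L k :=
      Finset.sum_congr rfl hγstar1
    have h3 : ∑ k ∈ Stilde, γstar k = C := by
      rw [Finset.sum_congr rfl hγstar2, ← Finset.sum_div, ← Finset.sum_mul]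
      field_simp
    rw [← h1, h2, h3, hC]; ring
  -- the slope of the tangent at γstar k is ≤ lam, with equality on Stilde
  have hg_eq : ∀ k ∈ Stilde, p k * δ k / (γstar k) ^ 2 = lam := by
    intro k hk
    have hkS := hSt hk
    have h1 : γstar k = Real.sqrt (p k * δ k) / sqrtlam := by
      rw [hγstar2 k hk, hsqrtlam, div_div_eq_mul_div]
    have h2 : Real.sqrt (p k * δ k) ^ 2 = p k * δ k :=
      Real.sq_sqrt (hpd k hkS).le
    rw [h1, div_pow, h2, hlamdef, div_div_eq_mul_div]
    exact mul_div_cancel_left₀ _ (hpd k hkS).ne'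
  have hg_le : ∀ k ∈ S \ Stilde, p k * δ k / (γstar k) ^ 2 ≤ lam := by
    intro k hk
    have hkS := (Finset.mem_sdiff.mp hk).1
    have hLk := hL k hkS
    have h1 : Real.sqrt (p k * δ k) ≤ L k * sqrtlam :=
      (div_le_iff₀ hsl).mp (hdual k hk)
    have h2 : Real.sqrt (p k * δ k) ^ 2 ≤ (L k * sqrtlam) ^ 2 :=
      pow_le_pow_left₀ (Real.sqrt_nonneg _) h1 2
    have h3 : p k * δ k ≤ lam * L k ^ 2 := by
      rw [Real.sq_sqrt (hpd k hkS).le] at h2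
      rw [hlamdef]; nlinarith
    rw [hγstar1 k hk]
    rw [div_le_iff₀ (by positivity)]
    linarith [h3]
  -- key per-coordinate inequality via the tangent line with slope lam
  have hkey : ∀ γ : K → ℝ, (∀ k ∈ S, L k ≤ γ k) → ∀ k ∈ S,
      p k * (1 - δ k / γ k) ≤ p k * (1 - δ k / γstar k) + lam * (γ k - γstar k) := by
    intro γ hγ k hk
    have hxpos : 0 < γ k := lt_of_lt_of_le (hL k hk) (hγ k hk)
    have hapos := hγpos k hk
    have gap := tangent_gap (p k) (δ k) (γstar k) (γ k) hapos.ne' hxpos.ne'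
    have hT : 0 ≤ p k * δ k * (γ k - γstar k) ^ 2 / ((γstar k) ^ 2 * γ k) :=
      div_nonneg (mul_nonneg (hpd k hk).le (sq_nonneg _))
        (mul_nonneg (sq_nonneg _) hxpos.le)
    have hslope : (p k * δ k / (γstar k) ^ 2) * (γ k - γstar k)
        ≤ lam * (γ k - γstar k) := by
      by_cases h : k ∈ Stilde
      · rw [hg_eq k h]
      · have hmem : k ∈ S \ Stilde := Finset.mem_sdiff.mpr ⟨hk, h⟩
        have hnn : 0 ≤ γ k - γstar k := by
          rw [hγstar1 k hmem]; linarith [hγ k hk]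
        exact mul_le_mul_of_nonneg_right (hg_le k hmem) hnn
    linarith
  refine ⟨⟨hfeas1, hsum.le⟩, ?_⟩
  intro γ hγL hγB
  have hsumkey : ∑ k ∈ S, p k * (1 - δ k / γ k)
      ≤ ∑ k ∈ S, (p k * (1 - δ k / γstar k) + lam * (γ k - γstar k)) :=
    Finset.sum_le_sum (hkey γ hγL)
  have hsplitsum : ∑ k ∈ S, (p k * (1 - δ k / γstar k) + lam * (γ k - γstar k))
      = (∑ k ∈ S, p k * (1 - δ k / γstar k)) + lam * ((∑ k ∈ S, γ k) - B) := by
    rw [Finset.sum_add_distrib, ← Finset.mul_sum, Finset.sum_sub_distrib, hsum]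
  have hslack : lam * ((∑ k ∈ S, γ k) - B) ≤ 0 := by
    have : (∑ k ∈ S, γ k) - B ≤ 0 := by linarith
    exact mul_nonpos_of_nonneg_of_nonpos hlampos.le this
  constructor
  · rw [hsplitsum] at hsumkey; linarith
  · -- uniqueness
    intro heq k hk
    -- each per-coordinate slack must vanish
    have hE0 : ∀ j ∈ S,
        p j * (1 - δ j / γstar j) + lam * (γ j - γstar j) - p j * (1 - δ j / γ j) = 0 := by
      have hnn : ∀ j ∈ S, 0 ≤
          p j * (1 - δ j / γstar j) + lam * (γ j - γstar j) - p j * (1 - δ j / γ j) := by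
        intro j hj; linarith [hkey γ hγL j hj]
      have hsumE : ∑ j ∈ S,
          (p j * (1 - δ j / γstar j) + lam * (γ j - γstar j) - p j * (1 - δ j / γ j)) ≤ 0 := by
        rw [Finset.sum_sub_distrib, hsplitsum, heq]
        linarith
      have hsumE0 : ∑ j ∈ S,
          (p j * (1 - δ j / γstar j) + lam * (γ j - γstar j) - p j * (1 - δ j / γ j)) = 0 :=
        le_antisymm hsumE (Finset.sum_nonneg hnn)
      exact fun j hj => (Finset.sum_eq_zero_iff_of_nonneg hnn).mp hsumE0 j hj
    have hxpos : 0 < γ k := lt_of_lt_of_le (hL k hk) (hγL k hk)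
    have hapos := hγpos k hk
    have gap := tangent_gap (p k) (δ k) (γstar k) (γ k) hapos.ne' hxpos.ne'
    have hEk := hE0 k hk
    -- E k = T k + (lam - g k) * (γ k - γstar k), both nonneg, so T k = 0
    have hT0 : p k * δ k * (γ k - γstar k) ^ 2 / ((γstar k) ^ 2 * γ k) = 0 := by
      have hT : 0 ≤ p k * δ k * (γ k - γstar k) ^ 2 / ((γstar k) ^ 2 * γ k) :=
        div_nonneg (mul_nonneg (hpd k hk).le (sq_nonneg _))
          (mul_nonneg (sq_nonneg _) hxpos.le)
      by_cases h : k ∈ Stilde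
      · have hg := hg_eq k h
        rw [hg] at gap
        linarith
      · have hmem : k ∈ S \ Stilde := Finset.mem_sdiff.mpr ⟨hk, h⟩
        have hnn : 0 ≤ γ k - γstar k := by
          rw [hγstar1 k hmem]; linarith [hγL k hk]
        have hslack2 : (p k * δ k / (γstar k) ^ 2) * (γ k - γstar k)
            ≤ lam * (γ k - γstar k) :=
          mul_le_mul_of_nonneg_right (hg_le k hmem) hnn
        linarith
    have hden : 0 < (γstar k) ^ 2 * γ k := mul_pos (pow_pos hapos 2) hxpos
    have : (γ k - γstar k) ^ 2 = 0 := by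
      by_contra hne
      have h2 : 0 < (γ k - γstar k) ^ 2 :=
        lt_of_le_of_ne (sq_nonneg _) (Ne.symm hne)
      have : 0 < p k * δ k * (γ k - γstar k) ^ 2 / ((γstar k) ^ 2 * γ k) :=
        div_pos (mul_pos (hpd k hk) h2) hden
      linarith [hT0]
    have := pow_eq_zero_iff (n := 2) (by norm_num) |>.mp this
    linarith [this]
end
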